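/- Let p be a prime, (n_k) a strictly increasing sequence of nonnegative integers with n_{k+1} − n_k → ∞, u_k the character of Δ_p given by u_k(ω) = exp(2πi (a_0 + a_1 p + … + a_{n_k} p^{n_k}) / p^{n_k+1}), and let G_u = s_u(Δ_p) = {ω ∈ Δ_p : u_k(ω) → 1} be equipped with the metric ρ(x, y) = d(x, y) + sup_k |u_k(x) − u_k(y)|. Then every continuous character of (G_u, ρ) is the restriction to G_u of the character of Δ_p determined by an element α of ℤ(p^∞); that is, the character group of G_u is algebraically isomorphic to ℤ(p^∞), the isomorphism sending α ∈ ℤ(p^∞) ⊂ ℚ/ℤ to the character ω ↦ exp(2πi α ω) (evaluation of the p-adic integer ω at α). -/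

import Mathlib

open Filter Topology

/-- The `i`-th digit `a_i ∈ {0, …, p-1}` of the canonical expansion `ω = Σ_i a_i p^i`
of a `p`-adic integer `ω`. -/
noncomputable def padicDigit (p : ℕ) [Fact p.Prime] (ω : ℤ_[p]) (i : ℕ) : ℕ :=
  (ω.appr (i + 1) - ω.appr i) / p ^ i

/-- The value at `ω ∈ Δ_p` of the character of `Δ_p` given by the element `1/p^m ∈ ℤ(p^∞)`:
`exp(2πi ω.appr m / p^m)`. -/
noncomputable def padicChar (p : ℕ) [Fact p.Prime] (m : ℕ) (ω : ℤ_[p]) : ℂ :=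
  Complex.exp (2 * Real.pi * Complex.I * (ω.appr m : ℂ) / (p : ℂ) ^ m)

/-- The standard metric of `Δ_p`: `d(x, y) = 2⁻ⁿ` where `n` is the first index at which the
digits of `x` and `y` differ (and `d(x, x) = 0`). -/
noncomputable def padicStdDist (p : ℕ) [Fact p.Prime] (x y : ℤ_[p]) : ℝ :=
  open scoped Classical in
  if x = y then 0 else (2 : ℝ)⁻¹ ^ sInf {i : ℕ | padicDigit p x i ≠ padicDigit p y i}

/-- The subgroup `s_u(Δ_p) = {ω : u_k(ω) → 1}` determined by the sequence of characters
`u_k = 1/p^{n_k + 1}`. -/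
def sU (p : ℕ) [Fact p.Prime] (n : ℕ → ℕ) : Set ℤ_[p] :=
  {ω | Tendsto (fun k => padicChar p (n k + 1) ω) atTop (𝓝 1)}

/-- The Polish group metric `ρ(x, y) = d(x, y) + sup_k |u_k(x) − u_k(y)|` on `s_u(Δ_p)`. -/
noncomputable def padicRho (p : ℕ) [Fact p.Prime] (n : ℕ → ℕ) (x y : ℤ_[p]) : ℝ :=
  padicStdDist p x y +
    ⨆ k : ℕ, ‖padicChar p (n k + 1) x - padicChar p (n k + 1) y‖

set_option maxHeartbeats 2000000

/-- Every continuous character `χ` of `G_u = (s_u(Δ_p), ρ)` (a circle-valued homomorphism on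
`s_u(Δ_p)`, continuous for the metric `ρ`) is the restriction to `G_u` of the character of
`Δ_p` determined by an element `α = a/p^m` of `ℤ(p^∞)`, i.e.
`χ(ω) = exp(2πi a ω.appr m / p^m)` for all `ω ∈ s_u(Δ_p)`. Hence the character group of
`G_u` is algebraically isomorphic to `ℤ(p^∞)`. -/




noncomputable def ee (t : ℝ) : ℂ := Complex.exp ((2 * Real.pi * t : ℝ) * Complex.I)

lemma ee_add (s t : ℝ) : ee (s + t) = ee s * ee t := by
  rw [ee, ee, ee, ← Complex.exp_add]
  push_cast
  ring_nf

lemma ee_int (A : ℤ) : ee A = 1 := by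
  rw [ee, Complex.exp_eq_one_iff]
  exact ⟨A, by push_cast; ring⟩

lemma ee_pow (t : ℝ) (M : ℕ) : (ee t) ^ M = ee (M * t) := by
  rw [ee, ee, ← Complex.exp_nat_mul]
  push_cast
  ring_nf

lemma abs_exp_mul_I_sub_one (t : ℝ) :
    ‖Complex.exp ((t : ℝ) * Complex.I) - 1‖ = 2 * |Real.sin (t / 2)| := by
  have h : Complex.exp ((t : ℝ) * Complex.I) - 1
      = ((Real.cos t - 1 : ℝ) : ℂ) + ((Real.sin t : ℝ) : ℂ) * Complex.I := by
    rw [Complex.exp_mul_I]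
    push_cast [← Complex.ofReal_cos, ← Complex.ofReal_sin]
    ring
  rw [h, Complex.norm_def, Complex.normSq_add_mul_I, Real.abs_sin_half]
  rw [show (Real.cos t - 1) ^ 2 + Real.sin t ^ 2 = 2 * (1 - Real.cos t) by
    have := Real.sin_sq_add_cos_sq t; nlinarith]
  rw [show (2 : ℝ) * (1 - Real.cos t) = 2 ^ 2 * ((1 - Real.cos t) / 2) by ring]
  rw [Real.sqrt_mul (by positivity), Real.sqrt_sq (by norm_num)]

lemma ee_abs (t : ℝ) : ‖ee t - 1‖ = 2 * |Real.sin (Real.pi * t)| := by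
  rw [ee, abs_exp_mul_I_sub_one]
  congr 2
  ring

lemma abs_sin_le_aux (x : ℝ) (h : 0 ≤ x) : |Real.sin x| ≤ x := by
  rcases le_total 1 x with h1 | h1
  · calc |Real.sin x| ≤ 1 := Real.abs_sin_le_one x
      _ ≤ x := h1
  · have hs : 0 ≤ Real.sin x :=
      Real.sin_nonneg_of_nonneg_of_le_pi h (by linarith [Real.two_le_pi])
    rw [abs_of_nonneg hs]
    exact Real.sin_le h

lemma abs_sin_le (x : ℝ) : |Real.sin x| ≤ |x| := by
  rcases le_total 0 x with h | h
  · rw [abs_of_nonneg h]; exact abs_sin_le_aux x h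
  · rw [abs_of_nonpos h]
    have h2 := abs_sin_le_aux (-x) (by linarith)
    rwa [Real.sin_neg, abs_neg] at h2

lemma ee_dist_le (t : ℝ) : ‖ee t - 1‖ ≤ 2 * Real.pi * |t| := by
  rw [ee_abs]
  calc 2 * |Real.sin (Real.pi * t)| ≤ 2 * |Real.pi * t| := by
        have := abs_sin_le (Real.pi * t); linarith
    _ = 2 * Real.pi * |t| := by
        rw [abs_mul, abs_of_nonneg Real.pi_pos.le]; ring

lemma ee_sub_round (t : ℝ) : ee t = ee (t - round t) := by
  have : t = (t - round t) + (round t : ℝ) := by ring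
  rw [show ee t = ee ((t - round t) + (round t : ℝ)) by rw [← this], ee_add, ee_int, mul_one]

lemma ee_arc {t : ℝ} {ε : ℝ} (h : ‖ee t - 1‖ < ε) :
    |t - round t| ≤ ε / 4 := by
  have hr : |t - (round t : ℝ)| ≤ 1 / 2 := abs_sub_round t
  set r := t - (round t : ℝ) with hrdef
  have h2 : ‖ee r - 1‖ < ε := by rw [← ee_sub_round]; exact h
  rw [ee_abs] at h2
  have hsin : 2 / Real.pi * |Real.pi * r| ≤ |Real.sin (Real.pi * r)| := by
    have h0 : 0 ≤ |Real.pi * r| := abs_nonneg _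
    have h1 : |Real.pi * r| ≤ Real.pi / 2 := by
      rw [abs_mul, abs_of_nonneg Real.pi_pos.le]
      nlinarith [Real.pi_pos]
    have := Real.mul_le_sin h0 h1
    calc 2 / Real.pi * |Real.pi * r| ≤ Real.sin |Real.pi * r| := this
      _ ≤ |Real.sin (Real.pi * r)| := by
          rcases abs_choice (Real.pi * r) with hc | hc
          · rw [hc]; exact le_abs_self _
          · rw [hc, Real.sin_neg]; exact neg_le_abs _
  have h4 : 4 * |r| ≤ 2 * |Real.sin (Real.pi * r)| := by
    rw [abs_mul, abs_of_nonneg Real.pi_pos.le] at hsin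
    have hpi : Real.pi ≠ 0 := Real.pi_ne_zero
    have e : 2 / Real.pi * (Real.pi * |r|) = 2 * |r| := by
      field_simp
    nlinarith [abs_nonneg r, Real.pi_pos]
  linarith

lemma ee_inj {s t : ℝ} (hs : |s| < 1/2) (ht : |t| < 1/2) (h : ee s = ee t) : s = t := by
  rw [ee, ee, Complex.exp_eq_exp_iff_exists_int] at h
  obtain ⟨N, hN⟩ := h
  have key : (s : ℂ) * (2 * (Real.pi : ℂ) * Complex.I)
      = ((t + N : ℝ) : ℂ) * (2 * (Real.pi : ℂ) * Complex.I) := by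
    push_cast at hN ⊢
    linear_combination hN
  have hne : (2 * (Real.pi : ℂ) * Complex.I) ≠ 0 := Complex.two_pi_I_ne_zero
  have hst : (s : ℂ) = ((t + N : ℝ) : ℂ) := mul_right_cancel₀ hne key
  have hrs : s = t + N := by exact_mod_cast hst
  have habs : |(N : ℝ)| < 1 := by
    have hNst : (N : ℝ) = s - t := by linarith
    rw [hNst]
    calc |s - t| ≤ |s| + |t| := abs_sub _ _
      _ < 1 := by linarith
  have hN1 : |N| < 1 := by exact_mod_cast (by push_cast; exact habs : ((|N| : ℤ) : ℝ) < ((1:ℤ) : ℝ))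
  have hN0 : N = 0 := Int.abs_lt_one_iff.mp hN1
  rw [hN0] at hrs
  simpa using hrs



section PadicAux
variable (p : ℕ) [Fact p.Prime]

lemma padic_dvd_sub_iff (a b m : ℕ) :
    (p : ℤ_[p]) ^ m ∣ ((a : ℤ_[p]) - b) ↔ ((p : ℤ) ^ m ∣ (a : ℤ) - b) := by
  have h1 : ((a : ℤ_[p]) - b) = (((a : ℤ) - b : ℤ) : ℤ_[p]) := by push_cast; ring
  rw [h1, PadicInt.pow_p_dvd_int_iff]

lemma padic_nat_eq_of_dvd (a b m : ℕ) (ha : a < p ^ m) (hb : b < p ^ m)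
    (h : (p : ℤ_[p]) ^ m ∣ ((a : ℤ_[p]) - b)) : a = b := by
  rw [padic_dvd_sub_iff] at h
  have hm : ((p : ℤ) ^ m) = ((p ^ m : ℕ) : ℤ) := by push_cast; ring
  rw [hm] at h
  have habs : |(a : ℤ) - b| < (p ^ m : ℕ) := by
    rw [abs_lt]
    constructor <;> [skip; skip] <;> push_cast <;> omega
  have := Int.eq_zero_of_abs_lt_dvd h habs
  omega

lemma padic_appr_dvd (x : ℤ_[p]) (m : ℕ) : (p : ℤ_[p]) ^ m ∣ (x - x.appr m) := by
  have := PadicInt.appr_spec m x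
  rwa [Ideal.mem_span_singleton] at this

lemma padic_appr_eq_of_dvd (x y : ℤ_[p]) (m t : ℕ) (hmt : m ≤ t)
    (h : (p : ℤ_[p]) ^ t ∣ x - y) : x.appr m = y.appr m := by
  apply padic_nat_eq_of_dvd p _ _ m (PadicInt.appr_lt x m) (PadicInt.appr_lt y m)
  have h1 : (p : ℤ_[p]) ^ m ∣ (x - x.appr m) := padic_appr_dvd p x m
  have h2 : (p : ℤ_[p]) ^ m ∣ (y - y.appr m) := padic_appr_dvd p y m
  have h3 : (p : ℤ_[p]) ^ m ∣ x - y := dvd_trans (pow_dvd_pow _ hmt) h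
  have : ((x.appr m : ℤ_[p]) - y.appr m) = (x - y.appr m) - (x - x.appr m) := by ring
  rw [this]
  have h4 : (p : ℤ_[p]) ^ m ∣ (x - y.appr m) := by
    have : x - (y.appr m : ℤ_[p]) = (x - y) + (y - y.appr m) := by ring
    rw [this]; exact dvd_add h3 h2
  exact dvd_sub h4 h1

lemma padic_appr_natCast (N m : ℕ) : ((N : ℤ_[p])).appr m = N % p ^ m := by
  apply padic_nat_eq_of_dvd p _ _ m (PadicInt.appr_lt _ m) (Nat.mod_lt _ (by
    have := (Fact.out : p.Prime).pos; positivity))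
  have h1 : (p : ℤ_[p]) ^ m ∣ ((N : ℤ_[p]) - (N : ℤ_[p]).appr m) := padic_appr_dvd p _ m
  have h2 : (p : ℤ_[p]) ^ m ∣ ((N : ℤ_[p]) - (N % p ^ m : ℕ)) := by
    rw [padic_dvd_sub_iff]
    have hmd := Nat.mod_add_div N (p ^ m)
    have hmdz : ((N % p ^ m : ℕ) : ℤ) + ((p ^ m : ℕ) : ℤ) * ((N / p ^ m : ℕ) : ℤ) = (N : ℤ) := by
      exact_mod_cast hmd
    have he : (N : ℤ) - (N % p ^ m : ℕ) = (p : ℤ) ^ m * (N / p ^ m : ℕ) := by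
      push_cast at hmdz ⊢
      linarith
    rw [he]
    exact Dvd.intro _ rfl
  have : ((N : ℤ_[p]).appr m : ℤ_[p]) - (N % p ^ m : ℕ)
      = ((N : ℤ_[p]) - (N % p ^ m : ℕ)) - ((N : ℤ_[p]) - (N : ℤ_[p]).appr m) := by ring
  rw [this]
  exact dvd_sub h2 h1

lemma padic_appr_succ (x : ℤ_[p]) (i : ℕ) :
    x.appr (i + 1) = x.appr i + (padicDigit p x i) * p ^ i := by
  have hd : p ^ i ∣ x.appr (i + 1) - x.appr i := PadicInt.dvd_appr_sub_appr x i (i+1) (by omega)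
  have hm : x.appr i ≤ x.appr (i + 1) := PadicInt.appr_mono x (by omega)
  rw [padicDigit, Nat.div_mul_cancel hd]
  omega

end PadicAux
section CharAux
variable (p : ℕ) [Fact p.Prime]

lemma padicChar_eq_ee (m : ℕ) (ω : ℤ_[p]) :
    padicChar p m ω = ee ((ω.appr m : ℝ) / (p : ℝ) ^ m) := by
  have hp : ((p : ℝ)) ^ m ≠ 0 := by
    have := (Fact.out : p.Prime).pos; positivity
  rw [padicChar, ee]
  congr 1
  push_cast
  field_simp

lemma padicChar_natCast (m N : ℕ) :
    padicChar p m (N : ℤ_[p]) = ee ((N : ℝ) / (p : ℝ) ^ m) := by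
  have hp : ((p : ℝ)) ^ m ≠ 0 := by
    have := (Fact.out : p.Prime).pos; positivity
  rw [padicChar_eq_ee, padic_appr_natCast]
  have hmd := Nat.mod_add_div N (p ^ m)
  have hmdr : ((N % p ^ m : ℕ) : ℝ) + ((p ^ m : ℕ) : ℝ) * ((N / p ^ m : ℕ) : ℝ) = (N : ℝ) := by
    exact_mod_cast hmd
  have he : (N : ℝ) / (p : ℝ) ^ m = ((N % p ^ m : ℕ) : ℝ) / (p : ℝ) ^ m + ((N / p ^ m : ℕ) : ℤ) := by
    push_cast at hmdr
    rw [Int.cast_natCast]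
    field_simp
    linarith
  rw [he, ee_add, ee_int, mul_one]

lemma padicChar_zero (m : ℕ) : padicChar p m 0 = 1 := by
  have h0 : ((0 : ℤ_[p])) = ((0 : ℕ) : ℤ_[p]) := by norm_cast
  rw [h0, padicChar_natCast]
  simp [ee]

variable (n : ℕ → ℕ) (hmono : StrictMono n)

lemma natCast_mem_sU (hmono : StrictMono n) (N : ℕ) : ((N : ℤ_[p])) ∈ sU p n := by
  have hp2 : (2 : ℝ) ≤ p := by exact_mod_cast (Fact.out : p.Prime).two_le
  unfold sU
  simp only [Set.mem_setOf_eq]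
  have key : ∀ k : ℕ, ‖padicChar p (n k + 1) (N : ℤ_[p]) - 1‖
      ≤ (2 * Real.pi * N) * (2⁻¹ : ℝ) ^ k := by
    intro k
    rw [padicChar_natCast]
    refine le_trans (ee_dist_le _) ?_
    rw [abs_of_nonneg (by positivity)]
    have hk : ((k : ℝ)) + 1 ≤ (p : ℝ) ^ (n k + 1) := by
      calc ((k : ℝ)) + 1 ≤ ((n k : ℝ)) + 1 := by
            have h1 := hmono.le_apply (x := k)
            have h2 : (k : ℝ) ≤ (n k : ℝ) := Nat.cast_le.mpr h1
            linarith
        _ ≤ (2 : ℝ) ^ (n k + 1) := by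
            have := Nat.lt_two_pow_self (n := n k + 1)
            push_cast at this ⊢
            have hnk : ((n k : ℝ)) + 1 ≤ ((n k + 1 : ℕ) : ℝ) := by push_cast; linarith
            calc ((n k : ℝ)) + 1 ≤ ((n k + 1 : ℕ) : ℝ) := hnk
              _ ≤ (2 : ℝ) ^ (n k + 1) := by exact_mod_cast (Nat.lt_two_pow_self (n := n k + 1)).le
        _ ≤ (p : ℝ) ^ (n k + 1) := by
            apply pow_le_pow_left₀ (by norm_num) hp2
    have h2k : (2 : ℝ) ^ k ≤ (p : ℝ) ^ (n k + 1) := by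
      calc (2 : ℝ) ^ k ≤ (2 : ℝ) ^ (n k + 1) := by
            apply pow_le_pow_right₀ (by norm_num)
            have := hmono.le_apply (x := k); omega
        _ ≤ (p : ℝ) ^ (n k + 1) := pow_le_pow_left₀ (by norm_num) hp2 _
    have hppos : (0 : ℝ) < (p : ℝ) ^ (n k + 1) := by
      have := (Fact.out : p.Prime).pos
      positivity
    calc 2 * Real.pi * ((N : ℝ) / (p : ℝ) ^ (n k + 1))
        ≤ 2 * Real.pi * ((N : ℝ) / (2 : ℝ) ^ k) := by
          apply mul_le_mul_of_nonneg_left _ (by positivity)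
          apply div_le_div_of_nonneg_left (by positivity) (by positivity) h2k
      _ = (2 * Real.pi * N) * (2⁻¹ : ℝ) ^ k := by
          rw [inv_pow]
          field_simp
    -- done
  have htendsto : Tendsto (fun k : ℕ => ‖padicChar p (n k + 1) (N : ℤ_[p]) - 1‖)
      atTop (𝓝 0) := by
    apply squeeze_zero (fun k => norm_nonneg _) key
    have := tendsto_pow_atTop_nhds_zero_of_lt_one (r := (2⁻¹ : ℝ)) (by norm_num) (by norm_num)
    simpa using this.const_mul (2 * Real.pi * N)
  rw [Metric.tendsto_atTop] at htendsto ⊢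
  intro ε hε
  obtain ⟨K, hK⟩ := htendsto ε hε
  refine ⟨K, fun k hk => ?_⟩
  have hthis := hK k hk
  rw [Real.dist_eq, sub_zero, abs_of_nonneg (norm_nonneg _)] at hthis
  rwa [Complex.dist_eq]

lemma padicStdDist_le (x y : ℤ_[p]) (t : ℕ) (h : (p : ℤ_[p]) ^ t ∣ x - y) :
    padicStdDist p x y ≤ (2⁻¹ : ℝ) ^ t := by
  classical
  rw [padicStdDist]
  split_ifs with hxy
  · positivity
  · apply pow_le_pow_of_le_one (by norm_num) (by norm_num)
    -- need t ≤ sInf S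
    have hsubset : ∀ i ∈ {i : ℕ | padicDigit p x i ≠ padicDigit p y i}, t ≤ i := by
      intro i hi
      by_contra hit
      push_neg at hit
      apply hi
      have h1 : x.appr (i + 1) = y.appr (i + 1) := padic_appr_eq_of_dvd p x y (i+1) t hit h
      have h2 : x.appr i = y.appr i := padic_appr_eq_of_dvd p x y i t (by omega) h
      rw [padicDigit, padicDigit, h1, h2]
    have hne : {i : ℕ | padicDigit p x i ≠ padicDigit p y i}.Nonempty := by
      by_contra hempty
      apply hxy
      rw [Set.not_nonempty_iff_eq_empty] at hempty
      have hdig : ∀ i, padicDigit p x i = padicDigit p y i := by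
        intro i
        by_contra hd
        have hmem : i ∈ {i : ℕ | padicDigit p x i ≠ padicDigit p y i} := hd
        rw [hempty] at hmem
        exact hmem
      have happr : ∀ m, x.appr m = y.appr m := by
        intro m
        induction m with
        | zero => rfl
        | succ i ih => rw [padic_appr_succ, padic_appr_succ, ih, hdig i]
      -- conclude x = y
      have hnorm : ∀ m : ℕ, ‖x - y‖ ≤ 2 * (p : ℝ) ^ (-(m : ℤ)) := by
        intro m
        have h1 : ‖x - x.appr m‖ ≤ (p : ℝ) ^ (-(m : ℤ)) :=
          (PadicInt.norm_le_pow_iff_mem_span_pow _ m).mpr (PadicInt.appr_spec m x)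
        have h2 : ‖y - y.appr m‖ ≤ (p : ℝ) ^ (-(m : ℤ)) :=
          (PadicInt.norm_le_pow_iff_mem_span_pow _ m).mpr (PadicInt.appr_spec m y)
        have he : x - y = (x - x.appr m) - (y - y.appr m) := by
          rw [happr m]; ring
        rw [he]
        calc ‖(x - x.appr m) - (y - y.appr m)‖ ≤ ‖x - x.appr m‖ + ‖y - y.appr m‖ :=
              norm_sub_le _ _
          _ ≤ 2 * (p : ℝ) ^ (-(m : ℤ)) := by linarith
      have hzero : ‖x - y‖ ≤ 0 := by
        have hlim : Tendsto (fun m : ℕ => 2 * (p : ℝ) ^ (-(m : ℤ))) atTop (𝓝 0) := by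
          have hp1 : (1 : ℝ) < p := by exact_mod_cast (Fact.out : p.Prime).one_lt
          have := tendsto_pow_atTop_nhds_zero_of_lt_one
            (r := ((p : ℝ))⁻¹) (by positivity) (inv_lt_one_of_one_lt₀ hp1)
          have h2 : Tendsto (fun m : ℕ => 2 * ((p : ℝ))⁻¹ ^ m) atTop (𝓝 0) := by
            simpa using this.const_mul 2
          convert h2 using 2 with m
          rw [zpow_neg, zpow_natCast, inv_pow]
        exact le_of_tendsto_of_tendsto' tendsto_const_nhds hlim hnorm
      have hn0 : ‖x - y‖ = 0 := le_antisymm hzero (norm_nonneg _)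
      exact sub_eq_zero.mp (norm_eq_zero.mp hn0)
    exact le_csInf hne hsubset

end CharAux
lemma round_nearest (x : ℝ) (A : ℤ) : |x - round x| ≤ |x - A| := by
  by_contra h
  push_neg at h
  have h1 : |x - round x| ≤ 1 / 2 := abs_sub_round x
  have h2 : |x - A| < 1 / 2 := lt_of_lt_of_le h h1
  have h3 : |((round x - A : ℤ) : ℝ)| < 1 := by
    push_cast
    calc |((round x : ℝ)) - A| = |(round x - x) + (x - A)| := by ring_nf
      _ ≤ |round x - x| + |x - A| := abs_add_le _ _
      _ = |x - round x| + |x - A| := by rw [abs_sub_comm]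
      _ < 1 := by linarith
  have h4 : round x = A := by
    have h5 : |round x - A| < 1 := by
      rw [← Int.cast_abs] at h3
      exact_mod_cast h3
    have := Int.abs_lt_one_iff.mp h5
    omega
  rw [show ((A : ℝ)) = ((round x : ℤ) : ℝ) by rw [h4]] at h
  exact absurd h (lt_irrefl _)

lemma no_int_in_gap {S η : ℝ} (hη : 0 < η) (hη4 : η < 1/4) (A : ℤ)
    (hA : |S - A| ≤ η) (h1 : η < S) (h2 : S ≤ 2 * η) : False := by
  have hub : (A : ℝ) ≤ 3 * η := by
    have := abs_le.mp hA
    linarith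
  have hlb : (0 : ℝ) < A := by
    have := abs_le.mp hA
    linarith
  have hA0 : (0 : ℤ) < A := by exact_mod_cast hlb
  have hA1 : (A : ℝ) < 1 := by linarith
  have : A < 1 := by exact_mod_cast hA1
  omega

lemma sum_le_of_signs (η : ℝ) (hη : 0 < η) (hη4 : η < 1/4) (r : ℕ → ℝ) (K₀ : ℕ) (Cb : ℕ → ℕ)
    (hr : ∀ k, K₀ ≤ k → |r k| ≤ η)
    (MP : ∀ K : ℕ, ∀ c : ℕ → ℕ, (∀ k, c k ≠ 0 → K₀ ≤ k ∧ c k ≤ Cb k) →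
        ∃ A : ℤ, |(∑ k ∈ Finset.range K, (c k : ℝ) * r k) - A| ≤ η) :
    ∀ K : ℕ, ∀ c : ℕ → ℕ, (∀ k, c k ≠ 0 → K₀ ≤ k ∧ c k ≤ Cb k ∧ 0 ≤ r k) →
      ∑ k ∈ Finset.range K, (c k : ℝ) * r k ≤ η := by
  suffices H : ∀ N K : ℕ, ∀ c : ℕ → ℕ,
      (∀ k, c k ≠ 0 → K₀ ≤ k ∧ c k ≤ Cb k ∧ 0 ≤ r k) →
      (∑ k ∈ Finset.range K, c k = N) →
      ∑ k ∈ Finset.range K, (c k : ℝ) * r k ≤ η by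
    intro K c hc
    exact H _ K c hc rfl
  intro N
  induction N using Nat.strong_induction_on with
  | _ N ih =>
    intro K c hc hsum
    by_contra hgt
    push_neg at hgt
    have hterm : ∀ k ∈ Finset.range K, 0 ≤ (c k : ℝ) * r k := by
      intro k _
      by_cases h : c k = 0
      · simp [h]
      · exact mul_nonneg (Nat.cast_nonneg _) (hc k h).2.2
    have hex : ∃ k ∈ Finset.range K, 0 < (c k : ℝ) * r k := by
      by_contra hall
      push_neg at hall
      have : ∑ k ∈ Finset.range K, (c k : ℝ) * r k ≤ 0 :=
        Finset.sum_nonpos fun k hk => hall k hk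
      linarith
    obtain ⟨k, hkmem, hkpos⟩ := hex
    have hck : c k ≠ 0 := by
      intro h0
      rw [h0] at hkpos
      simp at hkpos
    classical
    set c' := Function.update c k (c k - 1) with hc'def
    have hc'cond : ∀ j, c' j ≠ 0 → K₀ ≤ j ∧ c' j ≤ Cb j ∧ 0 ≤ r j := by
      intro j hj
      rcases eq_or_ne j k with rfl | hne
      · have := hc j hck
        rw [hc'def, Function.update_self] at hj ⊢
        exact ⟨this.1, le_trans (Nat.sub_le _ _) this.2.1, this.2.2⟩
      · rw [hc'def, Function.update_of_ne hne] at hj ⊢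
        exact hc j hj
    have h1 : ∑ j ∈ Finset.range K, c j = c k + ∑ j ∈ (Finset.range K).erase k, c j :=
      (Finset.add_sum_erase _ _ hkmem).symm
    have h2 : ∑ j ∈ Finset.range K, c' j = (c k - 1) + ∑ j ∈ (Finset.range K).erase k, c j := by
      rw [← Finset.add_sum_erase _ c' hkmem, hc'def, Function.update_self]
      congr 1
      apply Finset.sum_congr rfl
      intro j hj
      exact Function.update_of_ne (Finset.ne_of_mem_erase hj) _ _
    have hck1 : 1 ≤ c k := Nat.one_le_iff_ne_zero.mpr hck
    have hsum' : ∑ j ∈ Finset.range K, c' j = N - 1 := by omega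
    have hN1 : 1 ≤ N := by omega
    have hIH := ih (N - 1) (by omega) K c' hc'cond hsum'
    have hr1 : ∑ j ∈ Finset.range K, (c j : ℝ) * r j
        = (∑ j ∈ Finset.range K, (c' j : ℝ) * r j) + r k := by
      rw [← Finset.add_sum_erase _ (fun j => (c j : ℝ) * r j) hkmem,
          ← Finset.add_sum_erase _ (fun j => (c' j : ℝ) * r j) hkmem]
      have he : ∑ j ∈ (Finset.range K).erase k, (c' j : ℝ) * r j
          = ∑ j ∈ (Finset.range K).erase k, (c j : ℝ) * r j := by
        apply Finset.sum_congr rfl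
        intro j hj
        rw [hc'def, Function.update_of_ne (Finset.ne_of_mem_erase hj)]
      rw [he]
      have hcast : ((c k - 1 : ℕ) : ℝ) = (c k : ℝ) - 1 := by
        rw [Nat.cast_sub hck1]
        norm_num
      rw [hc'def, Function.update_self, hcast]
      ring
    have hrk : |r k| ≤ η := hr k (hc k hck).1
    have hS2 : ∑ j ∈ Finset.range K, (c j : ℝ) * r j ≤ 2 * η := by
      rw [hr1]
      have := abs_le.mp hrk
      linarith
    obtain ⟨A, hA⟩ := MP K c fun j hj => ⟨(hc j hj).1, (hc j hj).2.1⟩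
    exact no_int_in_gap hη hη4 A hA hgt hS2

lemma int_eq_zero_of_abs_lt {B : ℤ} (h : |(B : ℝ)| < 1) : B = 0 := by
  have h2 : |B| < 1 := by
    rw [← Int.cast_abs] at h
    exact_mod_cast h
  exact Int.abs_lt_one_iff.mp h2
/-- Every continuous character `χ` of `G_u = (s_u(Δ_p), ρ)` (a circle-valued homomorphism on
`s_u(Δ_p)`, continuous for the metric `ρ`) is the restriction to `G_u` of the character of
`Δ_p` determined by an element `α = a/p^m` of `ℤ(p^∞)`, i.e.
`χ(ω) = exp(2πi a ω.appr m / p^m)` for all `ω ∈ s_u(Δ_p)`. Hence the character group of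
`G_u` is algebraically isomorphic to `ℤ(p^∞)`. -/
theorem character_of_Gu_eq_prufer_eval
    (p : ℕ) [Fact p.Prime] (n : ℕ → ℕ) (hmono : StrictMono n)
    (hdiff : Tendsto (fun k => n (k + 1) - n k) atTop atTop)
    (χ : ℤ_[p] → ℂ)
    (hnorm : ∀ ω ∈ sU p n, ‖χ ω‖ = 1)
    (hhom : ∀ x ∈ sU p n, ∀ y ∈ sU p n, χ (x + y) = χ x * χ y)
    (hcont : ∀ x ∈ sU p n, ∀ ε > (0 : ℝ), ∃ δ > (0 : ℝ), ∀ y ∈ sU p n,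
      padicRho p n x y < δ → ‖χ y - χ x‖ < ε) :
    ∃ m a : ℕ, ∀ ω ∈ sU p n,
      χ ω = Complex.exp (2 * Real.pi * Complex.I * (a : ℂ) * (ω.appr m : ℂ) / (p : ℂ) ^ m) := by
  classical
  have hp : p.Prime := Fact.out
  have hp2 : 2 ≤ p := hp.two_le
  have hp2R : (2 : ℝ) ≤ p := by exact_mod_cast hp2
  have hpR : (0 : ℝ) < p := by positivity
  have hp1R : (1 : ℝ) < p := by linarith
  have hmem : ∀ N : ℕ, ((N : ℤ_[p])) ∈ sU p n := natCast_mem_sU p n hmono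
  have hmem0 : (0 : ℤ_[p]) ∈ sU p n := by simpa using hmem 0
  have hmem1 : (1 : ℤ_[p]) ∈ sU p n := by simpa using hmem 1
  have hχ0 : χ 0 = 1 := by
    have h := hhom 0 hmem0 0 hmem0
    rw [add_zero] at h
    have hne : χ 0 ≠ 0 := by
      intro h0
      have := hnorm 0 hmem0
      rw [h0] at this
      simp at this
    have h2 : χ 0 * 1 = χ 0 * χ 0 := by rw [mul_one]; exact h
    exact (mul_left_cancel₀ hne h2).symm
  set z := χ 1 with hzdef
  have hz1 : ‖z‖ = 1 := hnorm 1 hmem1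
  have hχnat : ∀ N : ℕ, χ ((N : ℤ_[p])) = z ^ N := by
    intro N
    induction N with
    | zero => simpa using hχ0
    | succ N ihN =>
      have hcast : ((N + 1 : ℕ) : ℤ_[p]) = (N : ℤ_[p]) + 1 := by push_cast; ring
      rw [hcast, hhom _ (hmem N) _ hmem1, ihN, pow_succ]
  set θ := z.arg / (2 * Real.pi) with hθdef
  have hzee : z = ee θ := by
    have h := Complex.norm_mul_exp_arg_mul_I z
    rw [hz1] at h
    push_cast at h
    rw [one_mul] at h
    rw [ee, ← h]
    congr 1
    have hpi : (Real.pi : ℂ) ≠ 0 := by exact_mod_cast Real.pi_ne_zero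
    rw [hθdef]
    push_cast
    field_simp
  have hχee : ∀ N : ℕ, χ ((N : ℤ_[p])) = ee (N * θ) := by
    intro N
    rw [hχnat N, hzee, ee_pow]
  -- continuity at 0 with ε = 1/4
  obtain ⟨δ, hδpos, hδ⟩ := hcont 0 hmem0 (1/4) (by norm_num)
  obtain ⟨s, hs⟩ := pow_unbounded_of_one_lt (R := ℝ) (8 * Real.pi / δ + 4) hp1R
  have hpspos : (0 : ℝ) < (p : ℝ) ^ s := by positivity
  have hs4 : (4 : ℝ) < (p : ℝ) ^ s := by
    have hpi := Real.pi_pos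
    have : (0 : ℝ) < 8 * Real.pi / δ := by positivity
    linarith
  have hsδ : 4 * Real.pi * ((p : ℝ) ^ s)⁻¹ < δ / 2 := by
    rw [mul_inv_lt_iff₀ hpspos]
    have h8 : 8 * Real.pi / δ < (p : ℝ) ^ s := by linarith
    rw [div_lt_iff₀ hδpos] at h8
    nlinarith
  obtain ⟨k₀, hk₀⟩ := exists_pow_lt_of_lt_one (x := δ/2) (y := (2⁻¹ : ℝ)) (by linarith) (by norm_num)
  obtain ⟨k₁, hk₁⟩ := (eventually_atTop).mp (hdiff.eventually_ge_atTop s)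
  set K₀ := max k₀ k₁ with hK₀def
  have hgapK : ∀ k, K₀ ≤ k → n k + s ≤ n (k + 1) := by
    intro k hk
    have h1 := hk₁ k (le_trans (le_max_right _ _) hk)
    have h2 : n k ≤ n (k + 1) := (hmono (Nat.lt_succ_self k)).le
    omega
  set Cb : ℕ → ℕ := fun k => p ^ (n (k + 1) + 1 - s - (n k + 1)) with hCbdef
  have hCb1 : ∀ k, 1 ≤ Cb k := fun k => Nat.one_le_pow _ _ hp.pos
  have hCbid : ∀ k, K₀ ≤ k → Cb k * p ^ (n k + 1) = p ^ (n (k + 1) + 1 - s) := by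
    intro k hk
    have hg := hgapK k hk
    have he : (n (k + 1) + 1 - s - (n k + 1)) + (n k + 1) = n (k + 1) + 1 - s := by omega
    rw [hCbdef, ← pow_add, he]
  have hCbid2 : ∀ k, K₀ ≤ k → Cb k * p ^ s * p ^ (n k + 1) = p ^ (n (k + 1) + 1) := by
    intro k hk
    have h1 := hCbid k hk
    have h2 := hgapK k hk
    have : p ^ (n (k + 1) + 1 - s) * p ^ s = p ^ (n (k + 1) + 1) := by
      have he : (n (k + 1) + 1 - s) + s = n (k + 1) + 1 := by omega
      rw [← pow_add, he]
    calc Cb k * p ^ s * p ^ (n k + 1) = Cb k * p ^ (n k + 1) * p ^ s := by ring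
      _ = p ^ (n (k + 1) + 1 - s) * p ^ s := by rw [h1]
      _ = p ^ (n (k + 1) + 1) := this
  set β : ℕ → ℝ := fun k => (p : ℝ) ^ (n k + 1) * θ with hβdef
  -- the main analytic estimate
  have MP : ∀ K : ℕ, ∀ c : ℕ → ℕ, (∀ k, c k ≠ 0 → K₀ ≤ k ∧ c k ≤ Cb k) →
      ∃ A : ℤ, |(∑ k ∈ Finset.range K, (c k : ℝ) * β k) - A| ≤ 1/16 := by
    intro K c hc
    set M := ∑ k ∈ Finset.range K, c k * p ^ (n k + 1) with hMdef
    have hMR : (M : ℝ) = ∑ k ∈ Finset.range K, (c k : ℝ) * (p : ℝ) ^ (n k + 1) := by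
      rw [hMdef]
      push_cast
      rfl
    -- geometric bound on partial sums
    have hgeom : ∀ j : ℕ, ((∑ k ∈ Finset.range j, c k * p ^ (n k + 1) : ℕ) : ℝ)
        ≤ 2 * (p : ℝ) ^ (n j + 1) / (p : ℝ) ^ s := by
      intro j
      induction j with
      | zero =>
        simp only [Finset.range_zero, Finset.sum_empty, Nat.cast_zero]
        positivity
      | succ j ihj =>
        rw [Finset.sum_range_succ]
        push_cast
        push_cast at ihj
        have hterm : ((c j : ℝ)) * (p : ℝ) ^ (n j + 1) ≤ (p : ℝ) ^ (n (j + 1) + 1) / (p : ℝ) ^ s := by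
          by_cases h0 : c j = 0
          · rw [h0, Nat.cast_zero, zero_mul]
            positivity
          · obtain ⟨hj1, hj2⟩ := hc j h0
            have hnat : c j * p ^ (n j + 1) ≤ p ^ (n (j + 1) + 1 - s) := by
              calc c j * p ^ (n j + 1) ≤ Cb j * p ^ (n j + 1) :=
                    Nat.mul_le_mul_right _ hj2
                _ = p ^ (n (j + 1) + 1 - s) := hCbid j hj1
            have hr : ((c j : ℝ)) * (p : ℝ) ^ (n j + 1) ≤ (p : ℝ) ^ (n (j + 1) + 1 - s) := by
              exact_mod_cast hnat
            have hid : (p : ℝ) ^ (n (j + 1) + 1 - s) * (p : ℝ) ^ s = (p : ℝ) ^ (n (j + 1) + 1) := by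
              have h2 := hgapK j hj1
              have he : (n (j + 1) + 1 - s) + s = n (j + 1) + 1 := by omega
              rw [← pow_add, he]
            rw [le_div_iff₀ hpspos]
            calc ((c j : ℝ)) * (p : ℝ) ^ (n j + 1) * (p:ℝ) ^ s
                ≤ (p : ℝ) ^ (n (j + 1) + 1 - s) * (p:ℝ) ^ s := by
                  apply mul_le_mul_of_nonneg_right hr (le_of_lt hpspos)
              _ = (p : ℝ) ^ (n (j + 1) + 1) := hid
        have hmono2 : 2 * (p : ℝ) ^ (n j + 1) ≤ (p : ℝ) ^ (n (j + 1) + 1) := by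
          have h1 : n j + 2 ≤ n (j + 1) + 1 := by
            have hlt : n j < n (j + 1) := hmono (by omega)
            omega
          calc 2 * (p : ℝ) ^ (n j + 1) ≤ (p : ℝ) * (p : ℝ) ^ (n j + 1) := by
                apply mul_le_mul_of_nonneg_right hp2R (by positivity)
            _ = (p : ℝ) ^ (n j + 2) := by rw [pow_succ]; ring
            _ ≤ (p : ℝ) ^ (n (j + 1) + 1) := pow_le_pow_right₀ (by linarith) h1
        have hdiv : 2 * (p : ℝ) ^ (n j + 1) / (p:ℝ)^s + (p : ℝ) ^ (n (j + 1) + 1) / (p:ℝ)^s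
            ≤ 2 * (p : ℝ) ^ (n (j + 1) + 1) / (p:ℝ)^s := by
          rw [← add_div, div_le_div_iff_of_pos_right hpspos]
          linarith
        linarith
    -- mod bound
    have hmod : ∀ j : ℕ, ((M % p ^ (n j + 1) : ℕ) : ℝ) ≤ 2 * (p : ℝ) ^ (n j + 1) / (p : ℝ) ^ s := by
      intro j
      set q := p ^ (n j + 1) with hqdef
      set Alow := ∑ k ∈ (Finset.range K).filter (fun k => k < j), c k * p ^ (n k + 1) with hAdef
      set Bhigh := ∑ k ∈ (Finset.range K).filter (fun k => ¬ k < j), c k * p ^ (n k + 1) with hBdef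
      have hsplit : M = Alow + Bhigh := by
        rw [hMdef, hAdef, hBdef, Finset.sum_filter_add_sum_filter_not]
      have hqB : q ∣ Bhigh := by
        apply Finset.dvd_sum
        intro k hk
        rw [Finset.mem_filter] at hk
        have hjk : j ≤ k := Nat.le_of_not_lt hk.2
        have : n j ≤ n k := hmono.monotone hjk
        exact Dvd.dvd.mul_left (pow_dvd_pow p (by omega)) _
      have hAbound : (Alow : ℝ) ≤ 2 * (p : ℝ) ^ (n j + 1) / (p : ℝ) ^ s := by
        have hsub : ((Finset.range K).filter (fun k => k < j)) ⊆ Finset.range j := by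
          intro k hk
          rw [Finset.mem_filter] at hk
          exact Finset.mem_range.mpr hk.2
        have h1 : Alow ≤ ∑ k ∈ Finset.range j, c k * p ^ (n k + 1) :=
          Finset.sum_le_sum_of_subset hsub
        calc (Alow : ℝ) ≤ ((∑ k ∈ Finset.range j, c k * p ^ (n k + 1) : ℕ) : ℝ) := by
              exact_mod_cast h1
          _ ≤ 2 * (p : ℝ) ^ (n j + 1) / (p : ℝ) ^ s := hgeom j
      have hAq : Alow < q := by
        have hqR : ((q : ℕ) : ℝ) = (p : ℝ) ^ (n j + 1) := by rw [hqdef]; push_cast; rfl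
        have h2 : 2 * (p : ℝ) ^ (n j + 1) / (p : ℝ) ^ s < (p : ℝ) ^ (n j + 1) := by
          rw [div_lt_iff₀ hpspos]
          have hpnj : (0:ℝ) < (p : ℝ) ^ (n j + 1) := by positivity
          nlinarith
        have : (Alow : ℝ) < ((q : ℕ) : ℝ) := by rw [hqR]; linarith
        exact_mod_cast this
      have hMq : M % q = Alow := by
        obtain ⟨w, hw⟩ := hqB
        rw [hsplit, hw, Nat.add_mul_mod_self_left, Nat.mod_eq_of_lt hAq]
      rw [hMq]
      exact hAbound
    -- divisibility by p^(n K₀ + 1)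
    have hMdvd : p ^ (n K₀ + 1) ∣ M := by
      rw [hMdef]
      apply Finset.dvd_sum
      intro k _
      by_cases h0 : c k = 0
      · rw [h0]; simp
      · have hk0 := (hc k h0).1
        have hnn : n K₀ ≤ n k := hmono.monotone hk0
        exact Dvd.dvd.mul_left (pow_dvd_pow p (by omega)) _
    have hdist : padicStdDist p 0 ((M : ℤ_[p])) < δ / 2 := by
      have hdvd2 : (p : ℤ_[p]) ^ (n K₀ + 1) ∣ (0 : ℤ_[p]) - (M : ℤ_[p]) := by
        obtain ⟨w, hw⟩ := hMdvd
        rw [zero_sub, dvd_neg, hw]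
        push_cast
        exact Dvd.intro _ rfl
      refine lt_of_le_of_lt (padicStdDist_le p _ _ _ hdvd2) ?_
      have hle : (2⁻¹ : ℝ) ^ (n K₀ + 1) ≤ (2⁻¹ : ℝ) ^ k₀ := by
        apply pow_le_pow_of_le_one (by norm_num) (by norm_num)
        have h1 : k₀ ≤ K₀ := le_max_left _ _
        have h2 := hmono.le_apply (x := K₀)
        omega
      linarith [hk₀]
    have hsup : ∀ k : ℕ, ‖padicChar p (n k + 1) 0 - padicChar p (n k + 1) ((M : ℤ_[p]))‖
        ≤ 4 * Real.pi * ((p : ℝ) ^ s)⁻¹ := by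
      intro k
      rw [padicChar_zero, padicChar_eq_ee, padic_appr_natCast]
      set t := ((M % p ^ (n k + 1) : ℕ) : ℝ) / (p : ℝ) ^ (n k + 1) with htdef
      have ht0 : 0 ≤ t := by positivity
      have ht : t ≤ 2 * ((p : ℝ) ^ s)⁻¹ := by
        rw [htdef, div_le_iff₀ (by positivity)]
        calc ((M % p ^ (n k + 1) : ℕ) : ℝ) ≤ 2 * (p : ℝ) ^ (n k + 1) / (p : ℝ) ^ s := hmod k
          _ = 2 * ((p : ℝ) ^ s)⁻¹ * (p : ℝ) ^ (n k + 1) := by ring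
      calc ‖1 - ee t‖ = ‖ee t - 1‖ := norm_sub_rev 1 (ee t)
        _ ≤ 2 * Real.pi * |t| := ee_dist_le t
        _ ≤ 4 * Real.pi * ((p : ℝ) ^ s)⁻¹ := by
            rw [abs_of_nonneg ht0]
            nlinarith [Real.pi_pos]
    have hρ : padicRho p n 0 ((M : ℤ_[p])) < δ := by
      rw [padicRho]
      have hsup2 : (⨆ k : ℕ, ‖padicChar p (n k + 1) 0
          - padicChar p (n k + 1) ((M : ℤ_[p]))‖) ≤ 4 * Real.pi * ((p : ℝ) ^ s)⁻¹ :=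
        ciSup_le hsup
      linarith [hdist, hsδ]
    have happly := hδ ((M : ℤ_[p])) (hmem M) hρ
    rw [hχ0, hχee M] at happly
    have harc := ee_arc happly
    refine ⟨round ((M : ℝ) * θ), ?_⟩
    have hsum : ∑ k ∈ Finset.range K, (c k : ℝ) * β k = (M : ℝ) * θ := by
      rw [hMR, Finset.sum_mul]
      apply Finset.sum_congr rfl
      intro k _
      rw [hβdef]
      ring
    rw [hsum]
    linarith [harc]
  -- per-block remainders
  set r : ℕ → ℝ := fun k => β k - round (β k) with hrdef
  have hsingle : ∀ k, K₀ ≤ k → ∀ c : ℕ, c ≤ Cb k → ∃ A : ℤ, |(c : ℝ) * β k - A| ≤ 1/16 := by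
    intro k hk c hcle
    obtain ⟨A, hA⟩ := MP (k + 1) (fun j => if j = k then c else 0) (by
      intro j hj
      by_cases hjk : j = k
      · subst hjk; exact ⟨hk, by simpa using hcle⟩
      · simp [hjk] at hj)
    refine ⟨A, ?_⟩
    have hsum : ∑ j ∈ Finset.range (k + 1), ((if j = k then c else 0 : ℕ) : ℝ) * β j
        = (c : ℝ) * β k := by
      have he : ∀ j ∈ Finset.range (k + 1), ((if j = k then c else 0 : ℕ) : ℝ) * β j
          = if j = k then (c : ℝ) * β j else 0 := by
        intro j _
        split_ifs <;> simp
      rw [Finset.sum_congr rfl he, Finset.sum_ite_eq' (Finset.range (k+1)) k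
        (fun j => (c : ℝ) * β j)]
      simp [Finset.mem_range]
    rwa [hsum] at hA
  have hr_le : ∀ k, K₀ ≤ k → |r k| ≤ 1/16 := by
    intro k hk
    obtain ⟨A, hA⟩ := hsingle k hk 1 (hCb1 k)
    rw [Nat.cast_one, one_mul] at hA
    exact le_trans (round_nearest (β k) A) hA
  have hmult : ∀ k, K₀ ≤ k → ∀ c : ℕ, c ≤ Cb k → |(c : ℝ) * r k| ≤ 1/16 := by
    intro k hk c
    induction c with
    | zero => intro _; simp
    | succ c ihc =>
      intro hc1
      have ih := ihc (by omega)
      have hrk := hr_le k hk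
      have h2 : |((c + 1 : ℕ) : ℝ) * r k| ≤ 1/8 := by
        have he : ((c + 1 : ℕ) : ℝ) * r k = (c : ℝ) * r k + r k := by push_cast; ring
        rw [he]
        calc |(c : ℝ) * r k + r k| ≤ |(c : ℝ) * r k| + |r k| := abs_add_le _ _
          _ ≤ 1/8 := by linarith
      obtain ⟨A, hA⟩ := hsingle k hk (c + 1) hc1
      set B := A - (c + 1 : ℤ) * round (β k) with hBdef
      have hBeq : ((c + 1 : ℕ) : ℝ) * β k - A = ((c + 1 : ℕ) : ℝ) * r k - B := by
        rw [hBdef]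
        simp only [hrdef]
        push_cast
        ring
      rw [hBeq] at hA
      have hB0 : B = 0 := by
        apply int_eq_zero_of_abs_lt
        have he : (B : ℝ) = ((c + 1 : ℕ) : ℝ) * r k - (((c + 1 : ℕ) : ℝ) * r k - B) := by ring
        rw [he]
        calc |((c + 1 : ℕ) : ℝ) * r k - (((c + 1 : ℕ) : ℝ) * r k - (B : ℝ))|
            ≤ |((c + 1 : ℕ) : ℝ) * r k| + |((c + 1 : ℕ) : ℝ) * r k - (B : ℝ)| := abs_sub _ _
          _ < 1 := by linarith
      rw [hB0] at hA
      simpa using hA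
  have MP' : ∀ K : ℕ, ∀ c : ℕ → ℕ, (∀ k, c k ≠ 0 → K₀ ≤ k ∧ c k ≤ Cb k) →
      ∃ A : ℤ, |(∑ k ∈ Finset.range K, (c k : ℝ) * r k) - A| ≤ 1/16 := by
    intro K c hc
    obtain ⟨A, hA⟩ := MP K c hc
    refine ⟨A - ∑ k ∈ Finset.range K, (c k : ℤ) * round (β k), ?_⟩
    have hsum2 : ∑ k ∈ Finset.range K, (c k : ℝ) * r k
        = (∑ k ∈ Finset.range K, (c k : ℝ) * β k)
          - ∑ k ∈ Finset.range K, (c k : ℝ) * ((round (β k) : ℤ) : ℝ) := by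
      rw [← Finset.sum_sub_distrib]
      apply Finset.sum_congr rfl
      intro k _
      simp only [hrdef]
      ring
    have hcast : ((∑ k ∈ Finset.range K, (c k : ℤ) * round (β k) : ℤ) : ℝ)
        = ∑ k ∈ Finset.range K, (c k : ℝ) * ((round (β k) : ℤ) : ℝ) := by
      push_cast
      rfl
    have he : (∑ k ∈ Finset.range K, (c k : ℝ) * r k)
        - ((A - ∑ k ∈ Finset.range K, (c k : ℤ) * round (β k) : ℤ) : ℝ)
        = (∑ k ∈ Finset.range K, (c k : ℝ) * β k) - A := by
      rw [Int.cast_sub, hcast, hsum2]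
      ring
    rw [he]
    exact hA
  have hsign := sum_le_of_signs (1/16) (by norm_num) (by norm_num) r K₀ Cb hr_le MP'
  have hsignneg : ∀ K : ℕ, ∀ c : ℕ → ℕ,
      (∀ k, c k ≠ 0 → K₀ ≤ k ∧ c k ≤ Cb k ∧ 0 ≤ -(r k)) →
      ∑ k ∈ Finset.range K, (c k : ℝ) * (-(r k)) ≤ 1/16 := by
    apply sum_le_of_signs (1/16) (by norm_num) (by norm_num) (fun k => -(r k)) K₀ Cb
    · intro k hk
      rw [abs_neg]
      exact hr_le k hk
    · intro K c hc
      obtain ⟨A, hA⟩ := MP' K c hc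
      refine ⟨-A, ?_⟩
      have h1 : (∑ k ∈ Finset.range K, (c k : ℝ) * (-(r k)))
          = -(∑ k ∈ Finset.range K, (c k : ℝ) * r k) := by
        rw [← Finset.sum_neg_distrib]
        apply Finset.sum_congr rfl
        intro k _
        ring
      have he : (∑ k ∈ Finset.range K, (c k : ℝ) * (-(r k))) - ((-A : ℤ) : ℝ)
          = -((∑ k ∈ Finset.range K, (c k : ℝ) * r k) - A) := by
        rw [h1]
        push_cast
        ring
      rw [he, abs_neg]
      exact hA
  set g : ℕ → ℝ := fun k => if K₀ ≤ k then (Cb k : ℝ) * |r k| else 0 with hgdef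
  have hg0 : ∀ k, 0 ≤ g k := by
    intro k
    simp only [hgdef]
    split_ifs
    · positivity
    · exact le_refl 0
  have hgsum : ∀ K, ∑ k ∈ Finset.range K, g k ≤ 1/8 := by
    intro K
    set cp : ℕ → ℕ := fun k => if K₀ ≤ k ∧ 0 ≤ r k then Cb k else 0 with hcpdef
    set cm : ℕ → ℕ := fun k => if K₀ ≤ k ∧ 0 ≤ -(r k) then Cb k else 0 with hcmdef
    have h1 := hsign K cp (by
      intro k hk
      simp only [hcpdef] at hk ⊢
      by_cases h : K₀ ≤ k ∧ 0 ≤ r k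
      · rw [if_pos h]
        exact ⟨h.1, le_refl _, h.2⟩
      · rw [if_neg h] at hk
        exact absurd rfl hk)
    have h2 := hsignneg K cm (by
      intro k hk
      simp only [hcmdef] at hk ⊢
      by_cases h : K₀ ≤ k ∧ 0 ≤ -(r k)
      · rw [if_pos h]
        exact ⟨h.1, le_refl _, h.2⟩
      · rw [if_neg h] at hk
        exact absurd rfl hk)
    have hpt : ∀ k ∈ Finset.range K, g k ≤ (cp k : ℝ) * r k + (cm k : ℝ) * (-(r k)) := by
      intro k _
      simp only [hgdef, hcpdef, hcmdef]
      by_cases hk : K₀ ≤ k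
      · by_cases hr0 : 0 ≤ r k
        · rw [if_pos hk, if_pos ⟨hk, hr0⟩, abs_of_nonneg hr0]
          have hnn : (0:ℝ) ≤ ((if K₀ ≤ k ∧ 0 ≤ -(r k) then Cb k else 0 : ℕ) : ℝ) * (-(r k)) := by
            split_ifs with h
            · exact mul_nonneg (Nat.cast_nonneg _) h.2
            · simp
          linarith
        · push_neg at hr0
          rw [if_pos hk, if_neg (fun h => absurd h.2 (not_le.mpr hr0)),
            if_pos ⟨hk, by linarith⟩, abs_of_neg hr0]
          simp
      · rw [if_neg hk, if_neg (fun h => hk h.1), if_neg (fun h => hk h.1)]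
        simp
    calc ∑ k ∈ Finset.range K, g k
        ≤ ∑ k ∈ Finset.range K, ((cp k : ℝ) * r k + (cm k : ℝ) * (-(r k))) :=
          Finset.sum_le_sum hpt
      _ = (∑ k ∈ Finset.range K, (cp k : ℝ) * r k)
          + ∑ k ∈ Finset.range K, (cm k : ℝ) * (-(r k)) := Finset.sum_add_distrib
      _ ≤ 1/16 + 1/16 := add_le_add h1 h2
      _ = 1/8 := by norm_num
  have hgsummable : Summable g := summable_of_sum_range_le hg0 hgsum
  have hgtend := hgsummable.tendsto_atTop_zero
  rw [Metric.tendsto_atTop] at hgtend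
  obtain ⟨K₂', hK₂'⟩ := hgtend (((p : ℝ) ^ s)⁻¹ / 2) (by positivity)
  set K₂ := max K₂' K₀ with hK₂def
  have hK₂K₀ : K₀ ≤ K₂ := le_max_right _ _
  have hsmall : ∀ k, K₂ ≤ k → (Cb k : ℝ) * |r k| < ((p : ℝ) ^ s)⁻¹ / 2 := by
    intro k hk
    have h1 := hK₂' k (le_trans (le_max_left _ _) hk)
    rw [Real.dist_eq, sub_zero] at h1
    have hk0 : K₀ ≤ k := le_trans hK₂K₀ hk
    simp only [hgdef, if_pos hk0] at h1
    rwa [abs_of_nonneg (by positivity)] at h1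
  have hQR : ∀ k, K₀ ≤ k → ((Cb k * p ^ s : ℕ) : ℝ) * β k = β (k + 1) := by
    intro k hk
    have hid := hCbid2 k hk
    have hidR : ((Cb k : ℝ) * (p : ℝ) ^ s) * (p : ℝ) ^ (n k + 1) = (p : ℝ) ^ (n (k + 1) + 1) := by
      exact_mod_cast congrArg (fun x : ℕ => (x : ℝ)) hid
    simp only [hβdef]
    push_cast
    linear_combination θ * hidR
  have hrec : ∀ k, K₂ ≤ k → r (k + 1) = ((Cb k * p ^ s : ℕ) : ℝ) * r k := by
    intro k hk
    have hk0 : K₀ ≤ k := le_trans hK₂K₀ hk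
    have h1 : ee (r (k + 1)) = ee (β (k + 1)) := by
      simp only [hrdef]
      exact (ee_sub_round (β (k + 1))).symm
    have h2 : ee (β (k + 1)) = ee (((Cb k * p ^ s : ℕ) : ℝ) * r k) := by
      rw [← hQR k hk0, ← ee_pow, ← ee_pow]
      congr 1
      simp only [hrdef]
      exact ee_sub_round (β k)
    have h3 : ee (r (k + 1)) = ee (((Cb k * p ^ s : ℕ) : ℝ) * r k) := h1.trans h2
    apply ee_inj ?ha ?hb h3
    case ha =>
      have := hr_le (k + 1) (by omega)
      calc |r (k + 1)| ≤ 1/16 := this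
        _ < 1/2 := by norm_num
    case hb =>
      have hsm := hsmall k hk
      have habsQ : |((Cb k * p ^ s : ℕ) : ℝ)| = ((Cb k * p ^ s : ℕ) : ℝ) :=
        abs_of_nonneg (Nat.cast_nonneg _)
      rw [abs_mul, habsQ]
      push_cast
      calc (Cb k : ℝ) * (p : ℝ) ^ s * |r k| = (p : ℝ) ^ s * ((Cb k : ℝ) * |r k|) := by ring
        _ < (p : ℝ) ^ s * (((p : ℝ) ^ s)⁻¹ / 2) := by
            exact mul_lt_mul_of_pos_left hsm hpspos
        _ = 1/2 := by field_simp
  have hrK₂ : r K₂ = 0 := by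
    by_contra hne
    have habs : 0 < |r K₂| := abs_pos.mpr hne
    have hQ2 : ∀ k, (2 : ℝ) ≤ ((Cb k * p ^ s : ℕ) : ℝ) := by
      intro k
      push_cast
      have h1 : (1 : ℝ) ≤ (Cb k : ℝ) := by exact_mod_cast hCb1 k
      nlinarith [hs4]
    have hgrow : ∀ j : ℕ, (2 : ℝ) ^ j * |r K₂| ≤ |r (K₂ + j)| := by
      intro j
      induction j with
      | zero => simp
      | succ j ihj =>
        have hrecj := hrec (K₂ + j) (by omega)
        have habsQ : |((Cb (K₂ + j) * p ^ s : ℕ) : ℝ)| = ((Cb (K₂ + j) * p ^ s : ℕ) : ℝ) :=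
          abs_of_nonneg (Nat.cast_nonneg _)
        rw [show K₂ + (j + 1) = (K₂ + j) + 1 by omega, hrecj, abs_mul, habsQ]
        have hQ := hQ2 (K₂ + j)
        calc (2 : ℝ) ^ (j + 1) * |r K₂| = 2 * ((2 : ℝ) ^ j * |r K₂|) := by ring
          _ ≤ 2 * |r (K₂ + j)| := by linarith
          _ ≤ ((Cb (K₂ + j) * p ^ s : ℕ) : ℝ) * |r (K₂ + j)| :=
              mul_le_mul_of_nonneg_right hQ (abs_nonneg _)
    obtain ⟨j, hj⟩ := pow_unbounded_of_one_lt (R := ℝ) ((1/16) / |r K₂|) (by norm_num : (1:ℝ) < 2)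
    have h1 : 1/16 < (2 : ℝ) ^ j * |r K₂| := by
      rw [div_lt_iff₀ habs] at hj
      linarith
    have h2 := hgrow j
    have h3 := hr_le (K₂ + j) (by omega)
    linarith
  set m := n K₂ + 1 with hmdef
  have hβint : β K₂ = ((round (β K₂) : ℤ) : ℝ) := by
    have h := hrK₂
    simp only [hrdef] at h
    linarith
  have hzpm : z ^ (p ^ m) = 1 := by
    rw [hzee, ee_pow]
    have he : ((p ^ m : ℕ) : ℝ) * θ = ((round (β K₂) : ℤ) : ℝ) := by
      rw [← hβint]
      simp only [hβdef, hmdef]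
      push_cast
      ring
    rw [he, ee_int]
  -- extract root-of-unity exponent a
  have hpm0 : (p ^ m : ℕ) ≠ 0 := pow_ne_zero _ hp.pos.ne'
  haveI : NeZero (p ^ m) := ⟨hpm0⟩
  obtain ⟨a, halt, ha⟩ := (Complex.isPrimitiveRoot_exp (p ^ m) hpm0).eq_pow_of_pow_eq_one hzpm
  have hpmC : ((p : ℂ)) ^ m ≠ 0 := by
    have hc : (p : ℂ) ≠ 0 := by exact_mod_cast hp.pos.ne'
    exact pow_ne_zero _ hc
  have hzee2 : z = ee ((a : ℝ) / (p : ℝ) ^ m) := by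
    rw [← ha, ← Complex.exp_nat_mul, ee]
    congr 1
    push_cast
    field_simp
  refine ⟨m, a, ?_⟩
  intro ω hω
  have hval : ∀ j, K₂ ≤ j → χ ((ω.appr (n j + 1) : ℤ_[p]))
      = ee ((a : ℝ) * (ω.appr m : ℝ) / (p : ℝ) ^ m) := by
    intro j hj
    have hmle : m ≤ n j + 1 := by
      rw [hmdef]
      have := hmono.monotone hj
      omega
    have hdvd := PadicInt.dvd_appr_sub_appr ω m (n j + 1) hmle
    have hmono2 : ω.appr m ≤ ω.appr (n j + 1) := PadicInt.appr_mono ω hmle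
    obtain ⟨t, ht⟩ := hdvd
    have hNt : ω.appr (n j + 1) = ω.appr m + p ^ m * t := by omega
    rw [hχnat, hzee2, ee_pow]
    have hpmR : ((p : ℝ)) ^ m ≠ 0 := by positivity
    have hsplit : ((ω.appr (n j + 1) : ℕ) : ℝ) * ((a : ℝ) / (p : ℝ) ^ m)
        = (a : ℝ) * (ω.appr m : ℝ) / (p : ℝ) ^ m + ((a * t : ℕ) : ℤ) := by
      rw [hNt]
      push_cast
      field_simp
    rw [hsplit, ee_add, ee_int, mul_one]
  have hρj : ∀ ε' > (0 : ℝ), ∃ J, ∀ j ≥ J,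
      padicRho p n ω ((ω.appr (n j + 1) : ℤ_[p])) < ε' := by
    intro ε' hε'
    have hω' := hω
    rw [sU, Set.mem_setOf_eq, Metric.tendsto_atTop] at hω'
    obtain ⟨J₁, hJ₁⟩ := hω' (ε' / 4) (by linarith)
    obtain ⟨T, hT⟩ := pow_unbounded_of_one_lt (R := ℝ) (8 * Real.pi / ε') hp1R
    have hppT : (0 : ℝ) < (p : ℝ) ^ T := by positivity
    have hTbound : 2 * Real.pi * ((p : ℝ) ^ T)⁻¹ < ε' / 4 := by
      rw [mul_inv_lt_iff₀ hppT]
      rw [div_lt_iff₀ hε'] at hT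
      nlinarith [Real.pi_pos]
    obtain ⟨J₂, hJ₂⟩ := (eventually_atTop).mp (hdiff.eventually_ge_atTop T)
    obtain ⟨j₀, hj₀⟩ := exists_pow_lt_of_lt_one (x := ε'/2) (y := (2⁻¹ : ℝ))
      (by linarith) (by norm_num)
    refine ⟨max (max J₁ J₂) j₀, ?_⟩
    intro j hj
    have hjJ₁ : J₁ ≤ j := le_trans (le_trans (le_max_left _ _) (le_max_left _ _)) hj
    have hjJ₂ : J₂ ≤ j := le_trans (le_trans (le_max_right _ _) (le_max_left _ _)) hj
    have hjj₀ : j₀ ≤ j := le_trans (le_max_right _ _) hj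
    set N := ω.appr (n j + 1) with hNdef
    have hdvdN : (p : ℤ_[p]) ^ (n j + 1) ∣ ω - (N : ℤ_[p]) := padic_appr_dvd p ω (n j + 1)
    have hdistpart : padicStdDist p ω ((N : ℤ_[p])) < ε' / 2 := by
      refine lt_of_le_of_lt (padicStdDist_le p _ _ _ hdvdN) ?_
      have hle : (2⁻¹ : ℝ) ^ (n j + 1) ≤ (2⁻¹ : ℝ) ^ j₀ := by
        apply pow_le_pow_of_le_one (by norm_num) (by norm_num)
        have := hmono.le_apply (x := j)
        omega
      linarith
    have hsuppart : ∀ k : ℕ, ‖padicChar p (n k + 1) ω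
        - padicChar p (n k + 1) ((N : ℤ_[p]))‖ ≤ ε' / 2 := by
      intro k
      by_cases hkj : k ≤ j
      · have happr : ω.appr (n k + 1) = ((N : ℤ_[p])).appr (n k + 1) :=
          padic_appr_eq_of_dvd p ω ((N : ℤ_[p])) (n k + 1) (n j + 1)
            (by have := hmono.monotone hkj; omega) hdvdN
        rw [padicChar_eq_ee, padicChar_eq_ee, happr, sub_self, norm_zero]
        linarith
      · push_neg at hkj
        have h1 : ‖padicChar p (n k + 1) ω - 1‖ < ε' / 4 := by
          have := hJ₁ k (by omega)
          rwa [Complex.dist_eq] at this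
        have h2 : ‖padicChar p (n k + 1) ((N : ℤ_[p])) - 1‖
            ≤ 2 * Real.pi * ((p : ℝ) ^ T)⁻¹ := by
          rw [padicChar_natCast]
          refine le_trans (ee_dist_le _) ?_
          have hNlt : (N : ℝ) < (p : ℝ) ^ (n j + 1) := by
            exact_mod_cast PadicInt.appr_lt ω (n j + 1)
          have hexp : (p : ℝ) ^ (n j + 1) * (p : ℝ) ^ T ≤ (p : ℝ) ^ (n k + 1) := by
            rw [← pow_add]
            apply pow_le_pow_right₀ (by linarith)
            have hg := hJ₂ j hjJ₂
            have hm1 : n j ≤ n (j + 1) := (hmono (by omega)).le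
            have hm2 : n (j + 1) ≤ n k := hmono.monotone (by omega)
            omega
          have hpk : (0 : ℝ) < (p : ℝ) ^ (n k + 1) := by positivity
          have hfrac : (N : ℝ) / (p : ℝ) ^ (n k + 1) ≤ ((p : ℝ) ^ T)⁻¹ := by
            rw [div_le_iff₀ hpk]
            calc (N : ℝ) ≤ (p : ℝ) ^ (n j + 1) := le_of_lt hNlt
              _ = ((p : ℝ) ^ T)⁻¹ * ((p : ℝ) ^ (n j + 1) * (p : ℝ) ^ T) := by
                  field_simp
              _ ≤ ((p : ℝ) ^ T)⁻¹ * (p : ℝ) ^ (n k + 1) :=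
                  mul_le_mul_of_nonneg_left hexp (by positivity)
          rw [abs_of_nonneg (by positivity)]
          nlinarith [Real.pi_pos]
        have htri : ‖padicChar p (n k + 1) ω - padicChar p (n k + 1) ((N : ℤ_[p]))‖
            ≤ ‖padicChar p (n k + 1) ω - 1‖
              + ‖padicChar p (n k + 1) ((N : ℤ_[p])) - 1‖ := by
          have he : padicChar p (n k + 1) ω - padicChar p (n k + 1) ((N : ℤ_[p]))
              = (padicChar p (n k + 1) ω - 1) - (padicChar p (n k + 1) ((N : ℤ_[p])) - 1) := by
            ring
          rw [he]
          exact norm_sub_le _ _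
        linarith
    have hsup2 : (⨆ k, ‖padicChar p (n k + 1) ω
        - padicChar p (n k + 1) ((N : ℤ_[p]))‖) ≤ ε' / 2 := ciSup_le hsuppart
    rw [padicRho]
    linarith
  have hfinal : χ ω = ee ((a : ℝ) * (ω.appr m : ℝ) / (p : ℝ) ^ m) := by
    by_contra hne
    set d := ‖χ ω - ee ((a : ℝ) * (ω.appr m : ℝ) / (p : ℝ) ^ m)‖ with hddef
    have hd0 : 0 < d := by
      rw [hddef]
      exact norm_pos_iff.mpr (sub_ne_zero.mpr hne)
    obtain ⟨δ', hδ'pos, hδ'⟩ := hcont ω hω d hd0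
    obtain ⟨J, hJ⟩ := hρj δ' hδ'pos
    set j := max J K₂ with hjdef
    have h1 := hδ' ((ω.appr (n j + 1) : ℤ_[p])) (hmem _) (hJ j (le_max_left _ _))
    rw [hval j (le_max_right _ _)] at h1
    rw [norm_sub_rev, ← hddef] at h1
    exact lt_irrefl _ h1
  rw [hfinal, ee]
  congr 1
  push_cast
  field_simp
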